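/- Let r ∈ ℕ and let M ⊆ ℝ^{r+1} be a meagre set. Then the set {c ∈ ℝ : M ∩ H_c is meagre in the subspace H_c} is comeagre in ℝ. -/

import Mathlib

open Set Filter Topology TopologicalSpace

/-- For an open dense set `U` in a product, the set of `x` whose fiber is dense is residual. -/
lemma dense_fiber_residual {X Y : Type*} [TopologicalSpace X] [TopologicalSpace Y]
    [SecondCountableTopology Y] {U : Set (X × Y)} (hU : IsOpen U) (hUd : Dense U) :
    {x : X | Dense {y : Y | (x, y) ∈ U}} ∈ residual X := by
  obtain ⟨B, hBc, -, hB⟩ := exists_countable_basis Y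
  have key : ∀ V ∈ B, {x : X | V.Nonempty → ∃ y ∈ V, (x, y) ∈ U} ∈ residual X := by
    intro V hV
    by_cases hVne : V.Nonempty
    · have heq : {x : X | V.Nonempty → ∃ y ∈ V, (x, y) ∈ U}
          = Prod.fst '' (U ∩ univ ×ˢ V) := by
        ext x
        simp only [mem_setOf_eq, mem_image, mem_inter_iff, mem_prod, mem_univ, true_and]
        constructor
        · rintro h
          obtain ⟨y, hyV, hyU⟩ := h hVne
          exact ⟨(x, y), ⟨hyU, hyV⟩, rfl⟩
        · rintro ⟨⟨a, b⟩, ⟨hbU, hbV⟩, rfl⟩ _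
          exact ⟨b, hbV, hbU⟩
      rw [heq]
      apply residual_of_dense_open
      · exact isOpenMap_fst _ (hU.inter (isOpen_univ.prod (hB.isOpen hV)))
      · rw [dense_iff_inter_open]
        rintro W hW ⟨x₀, hx₀⟩
        obtain ⟨⟨x, y⟩, ⟨⟨hxW, hyV⟩, hUxy⟩⟩ :=
          hUd.inter_open_nonempty (W ×ˢ V) (hW.prod (hB.isOpen hV))
            ⟨(x₀, hVne.choose), hx₀, hVne.choose_spec⟩
        exact ⟨x, hxW, (x, y), ⟨hUxy, trivial, hyV⟩, rfl⟩
    · have heq : {x : X | V.Nonempty → ∃ y ∈ V, (x, y) ∈ U} = univ := by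
        ext x; simp [hVne]
      rw [heq]; exact univ_mem
  have hmem : (⋂ V ∈ B, {x : X | V.Nonempty → ∃ y ∈ V, (x, y) ∈ U}) ∈ residual X :=
    (countable_bInter_mem hBc).mpr key
  refine mem_of_superset hmem fun x hx => ?_
  rw [mem_iInter₂] at hx
  rw [mem_setOf_eq, hB.dense_iff]
  intro o ho hone
  obtain ⟨y, hyV, hyU⟩ := hx o ho hone
  exact ⟨y, hyV, hyU⟩

/-- Kuratowski–Ulam: meagre sets in a product have meagre fibers over a comeagre set. -/
lemma kuratowskiUlam {X Y : Type*} [TopologicalSpace X] [TopologicalSpace Y]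
    [SecondCountableTopology Y] {M : Set (X × Y)} (hM : IsMeagre M) :
    IsMeagre {x : X | ¬ IsMeagre {y : Y | (x, y) ∈ M}} := by
  rw [IsMeagre] at hM
  obtain ⟨S, hSo, hSd, hSc, hSsub⟩ := mem_residual_iff.mp hM
  have hres : (⋂ t ∈ S, {x : X | Dense {y : Y | (x, y) ∈ t}}) ∈ residual X :=
    (countable_bInter_mem hSc).mpr fun t ht =>
      dense_fiber_residual (hSo t ht) (hSd t ht)
  rw [IsMeagre, compl_setOf]
  simp only [not_not]
  refine mem_of_superset hres fun x hx => ?_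
  rw [mem_iInter₂] at hx
  rw [mem_setOf_eq]
  rw [isMeagre_iff_countable_union_isNowhereDense]
  refine ⟨(fun t => {y : Y | (x, y) ∈ tᶜ}) '' S, ?_, hSc.image _, ?_⟩
  · rintro _ ⟨t, htS, rfl⟩
    refine (isClosed_isNowhereDense_iff_compl.mpr ?_).2
    have : {y : Y | (x, y) ∈ tᶜ}ᶜ = {y : Y | (x, y) ∈ t} := by
      ext y; simp
    rw [this]
    exact ⟨(hSo t htS).preimage (Continuous.prodMk_right x), hx t htS⟩
  · intro y hyM
    have : (x, y) ∉ ⋂₀ S := fun hmem => hSsub hmem hyM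
    rw [mem_sInter] at this
    push_neg at this
    obtain ⟨t, htS, hnt⟩ := this
    exact ⟨_, ⟨t, htS, rfl⟩, hnt⟩

/-- The hyperplane `H_c = {(x_0, …, x_r) ∈ ℝ^{r+1} : x_r = c}`. -/
def hyperplane (r : ℕ) (c : ℝ) : Set (EuclideanSpace ℝ (Fin (r + 1))) :=
  {x | x (Fin.last r) = c}

/-- Splitting off the last coordinate of `ℝ^{r+1}`. -/
noncomputable def splitLast (r : ℕ) :
    EuclideanSpace ℝ (Fin (r + 1)) ≃ₜ ℝ × ({j : Fin (r + 1) // j ≠ Fin.last r} → ℝ) :=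
  (EuclideanSpace.equiv (Fin (r + 1)) ℝ).toHomeomorph.trans
    (Homeomorph.funSplitAt ℝ (Fin.last r))

/-- The hyperplane `H_c` is homeomorphic to the product of the remaining coordinates. -/
noncomputable def hyperplaneHomeo (r : ℕ) (c : ℝ) :
    ↥(hyperplane r c) ≃ₜ ({j : Fin (r + 1) // j ≠ Fin.last r} → ℝ) where
  toFun z j := (z : EuclideanSpace ℝ (Fin (r + 1))) j.1
  invFun f := ⟨(EuclideanSpace.equiv (Fin (r + 1)) ℝ).symm
      (fun j => if h : j = Fin.last r then c else f ⟨j, h⟩), by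
    simp [hyperplane, EuclideanSpace.equiv]⟩
  left_inv z := by
    apply Subtype.ext
    ext j
    simp only [EuclideanSpace.equiv, ContinuousLinearEquiv.symm_apply_apply]
    show (if h : j = Fin.last r then c else (z : EuclideanSpace ℝ (Fin (r + 1))) j) = _
    split_ifs with h
    · subst h; exact z.2.symm
    · rfl
  right_inv f := by
    funext j
    show (if h : j.1 = Fin.last r then c else f ⟨j.1, h⟩) = f j
    rw [dif_neg j.2]
  continuous_toFun := by
    apply continuous_pi
    intro j
    exact ((continuous_apply j.1).comp
      ((EuclideanSpace.equiv (Fin (r + 1)) ℝ).continuous.comp continuous_subtype_val))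
  continuous_invFun := by
    apply Continuous.subtype_mk
    refine (EuclideanSpace.equiv (Fin (r + 1)) ℝ).symm.continuous.comp ?_
    apply continuous_pi
    intro j
    by_cases h : j = Fin.last r
    · simp only [dif_pos h]; exact continuous_const
    · simp only [dif_neg h]; exact continuous_apply _

lemma splitLast_symm_hyperplaneHomeo (r : ℕ) (c : ℝ) (z : ↥(hyperplane r c)) :
    (splitLast r).symm (c, hyperplaneHomeo r c z) = (z : EuclideanSpace ℝ (Fin (r + 1))) := by
  simp only [splitLast, Homeomorph.symm_trans_apply,
    ContinuousLinearEquiv.coe_symm_toHomeomorph, ContinuousLinearEquiv.coe_toHomeomorph]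
  apply (EuclideanSpace.equiv (Fin (r + 1)) ℝ).symm_apply_eq.mpr
  funext j
  rw [Homeomorph.funSplitAt_symm_apply]
  split_ifs with h
  · subst h; exact z.2.symm
  · rfl

/-- If `M ⊆ ℝ^{r+1}` is meagre, then the set of `c ∈ ℝ` such that `M ∩ H_c` is meagre in
the subspace `H_c` is comeagre in ℝ (its complement is meagre). -/
theorem comeagre_meagre_fibres (r : ℕ)
    (M : Set (EuclideanSpace ℝ (Fin (r + 1)))) (hM : IsMeagre M) :
    IsMeagre ({c : ℝ |
      IsMeagre {y : ↥(hyperplane r c) | (y : EuclideanSpace ℝ (Fin (r + 1))) ∈ M}}ᶜ) := by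
  set e := splitLast r
  have hM' : IsMeagre (e.symm ⁻¹' M) :=
    hM.preimage_of_isOpenMap e.symm.continuous e.symm.isOpenMap
  have hKU := kuratowskiUlam hM'
  refine hKU.mono fun c hc => ?_
  simp only [mem_compl_iff, mem_setOf_eq] at hc ⊢
  intro hfib
  apply hc
  have hpre : {y : ↥(hyperplane r c) | (y : EuclideanSpace ℝ (Fin (r + 1))) ∈ M}
      = (hyperplaneHomeo r c) ⁻¹' {y | (c, y) ∈ e.symm ⁻¹' M} := by
    ext z
    simp only [mem_setOf_eq, mem_preimage]
    rw [splitLast_symm_hyperplaneHomeo]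
  rw [hpre]
  exact hfib.preimage_of_isOpenMap (hyperplaneHomeo r c).continuous
    (hyperplaneHomeo r c).isOpenMap
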